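/- Let V be a finite vertex set, let k be a positive integer, and let C be a spanning subgraph of a graph G on V such that κ(x,y;C) ≥ min{κ(x,y;G), k} for all vertices x, y ∈ V. Then every l-separator S of C with l < k is an l-separator of G. -/

import Mathlib

/-- The local vertex-connectivity `κ(x,y;G)`: the maximum number of pairwise
internally vertex-disjoint paths between `x` and `y` in `G`. -/
noncomputable def localVertexConn {V : Type*} (G : SimpleGraph V) (x y : V) : ℕ :=
  sSup {n : ℕ | ∃ P : Fin n → G.Path x y, Function.Injective P ∧
    Pairwise fun i j => ∀ v, v ∈ (P i).1.support → v ∈ (P j).1.support → v = x ∨ v = y}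

/-- `S` is an `l`-separator of `G`: `|S| = l` and removing the vertices of `S`
(together with all incident edges) leaves a graph with more connected components
than `G`. -/
def IsSeparator {V : Type*} (G : SimpleGraph V) (S : Finset V) (l : ℕ) : Prop :=
  S.card = l ∧
    Nat.card G.ConnectedComponent <
      Nat.card (G.induce ((S : Set V)ᶜ)).ConnectedComponent

open SimpleGraph

namespace LVCaux

/-- The defining set of `localVertexConn`. -/
def pathFam {V : Type*} (G : SimpleGraph V) (x y : V) : Set ℕ :=
  {n : ℕ | ∃ P : Fin n → G.Path x y, Function.Injective P ∧
    Pairwise fun i j => ∀ v, v ∈ (P i).1.support → v ∈ (P j).1.support → v = x ∨ v = y}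

lemma lvc_eq {V : Type*} (G : SimpleGraph V) (x y : V) :
    localVertexConn G x y = sSup (pathFam G x y) := rfl

lemma finite_path {V : Type*} [Fintype V] (G : SimpleGraph V) (u v : V) :
    Finite (G.Path u v) := by
  classical
  exact Finite.of_injective
    (fun p : G.Path u v =>
      (⟨p.1, p.2, p.2.length_lt⟩ : {w : G.Walk u v // w.IsPath ∧ w.length < Fintype.card V}))
    (fun p q h => Subtype.ext
      (congrArg (fun w : {w : G.Walk u v // w.IsPath ∧ w.length < Fintype.card V} => w.val) h))

lemma zero_mem_pathFam {V : Type*} (G : SimpleGraph V) (x y : V) : 0 ∈ pathFam G x y := by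
  refine ⟨fun i => i.elim0, fun i => i.elim0, fun i => i.elim0⟩

lemma bddAbove_pathFam {V : Type*} [Fintype V] (G : SimpleGraph V) (x y : V) :
    BddAbove (pathFam G x y) := by
  haveI := finite_path G x y
  refine ⟨Nat.card (G.Path x y), fun n hn => ?_⟩
  obtain ⟨P, hinj, -⟩ := hn
  have := Nat.card_le_card_of_injective P hinj
  simpa using this

lemma reachable_induce_of_walk {V : Type*} {C : SimpleGraph V} {s : Set V} :
    ∀ {u v : V} (w : C.Walk u v), (∀ x ∈ w.support, x ∈ s) →
    ∀ (hu : u ∈ s) (hv : v ∈ s), (C.induce s).Reachable ⟨u, hu⟩ ⟨v, hv⟩ := by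
  intro u v w
  induction w with
  | nil => intro _ hu hv; exact Reachable.refl _
  | @cons a b c hab p ih =>
    intro hw hu hv
    have hb : b ∈ s := hw b (by simp)
    refine (Adj.reachable ?_).trans (ih (fun x hx => hw x (by simp [hx])) hb hv)
    exact hab

/-- The key lemma: any `G`-edge with both endpoints outside `S` has its endpoints
connected in `C − S`. -/
lemma key {V : Type*} [Fintype V] {k : ℕ} {G C : SimpleGraph V} (hCG : C ≤ G)
    (hκ : ∀ x y : V, min (localVertexConn G x y) k ≤ localVertexConn C x y)
    {S : Finset V} (hS : S.card < k) {u v : V}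
    (hu : u ∈ ((S : Set V))ᶜ) (hv : v ∈ ((S : Set V))ᶜ)
    (huv : G.Adj u v) :
    (C.induce ((S : Set V)ᶜ)).Reachable ⟨u, hu⟩ ⟨v, hv⟩ := by
  have huS : u ∉ S := by simpa using hu
  have hvS : v ∉ S := by simpa using hv
  by_contra hcon
  -- every C-walk from u to v meets S
  have hmeet : ∀ (w : C.Walk u v), ∃ x ∈ w.support, x ∈ S := by
    intro w
    by_contra hx
    push_neg at hx
    exact hcon (reachable_induce_of_walk w (fun x hxs => by simpa using hx x hxs) hu hv)
  haveI := finite_path C u v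
  haveI := finite_path G u v
  set m := localVertexConn C u v with hm
  have hmem : m ∈ pathFam C u v := by
    rw [hm, lvc_eq]
    exact Nat.sSup_mem ⟨0, zero_mem_pathFam C u v⟩ (bddAbove_pathFam C u v)
  obtain ⟨P, hPinj, hPdisj⟩ := hmem
  -- m ≤ S.card
  have hmcard : m ≤ S.card := by
    have hf : ∀ i : Fin m, ∃ x, x ∈ S ∧ x ∈ (P i).1.support := by
      intro i
      obtain ⟨x, hx1, hx2⟩ := hmeet (P i).1
      exact ⟨x, hx2, hx1⟩
    choose f hfS hfsup using hf
    have hfinj : Function.Injective f := by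
      intro i j hij
      by_contra hne
      rcases hPdisj hne (f i) (hfsup i) (hij ▸ hfsup j) with h | h
      · exact huS (h ▸ hfS i)
      · exact hvS (h ▸ hfS i)
    classical
    calc m = Fintype.card (Fin m) := (Fintype.card_fin m).symm
      _ ≤ Fintype.card S :=
          Fintype.card_le_of_injective (fun i => (⟨f i, hfS i⟩ : S))
            (fun i j hij => hfinj (congrArg Subtype.val hij))
      _ = S.card := Fintype.card_coe S
  -- uv is not an edge of C
  have hCadj : ¬ C.Adj u v := by
    intro hadj
    obtain ⟨x, hx1, hx2⟩ := hmeet (Walk.cons hadj Walk.nil)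
    simp only [Walk.support_cons, Walk.support_nil, List.mem_cons, List.mem_singleton,
      List.not_mem_nil, or_false] at hx1
    rcases hx1 with rfl | rfl
    · exact huS hx2
    · exact hvS hx2
  -- transfer the m paths to G and add the edge u-v
  have hedges : ∀ i : Fin m, ∀ e ∈ (P i).1.edges, e ∈ G.edgeSet := by
    intro i e he
    exact (edgeSet_mono hCG) ((P i).1.edges_subset_edgeSet he)
  let T : Fin m → G.Path u v := fun i =>
    ⟨(P i).1.transfer G (hedges i), (P i).2.transfer _⟩
  have hTsupp : ∀ i, (T i).1.support = (P i).1.support := fun i =>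
    Walk.support_transfer _ _
  have hTedges : ∀ i, (T i).1.edges = (P i).1.edges := fun i =>
    Walk.edges_transfer _ _
  have hTinj : Function.Injective T := by
    intro i j hij
    apply hPinj
    apply Subtype.ext
    have hwalks : (T i).1 = (T j).1 := congrArg Subtype.val hij
    have hback : ∀ l : Fin m, ((T l).1.transfer C
        (by rw [hTedges l]; exact (P l).1.edges_subset_edgeSet)) = (P l).1 := by
      intro l
      show ((P l).1.transfer G (hedges l)).transfer C _ = (P l).1
      rw [Walk.transfer_transfer, Walk.transfer_self]
    calc (P i).1 = (T i).1.transfer C _ := (hback i).symm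
      _ = (T j).1.transfer C (by rw [hTedges j]; exact (P j).1.edges_subset_edgeSet) := by
          congr 1
      _ = (P j).1 := hback j
  let E : G.Path u v := Path.singleton huv
  have hEsupp : ∀ x, x ∈ E.1.support → x = u ∨ x = v := by
    intro x hx
    simp only [E, Path.singleton, Walk.support_cons, Walk.support_nil, List.mem_cons,
      List.mem_singleton, List.not_mem_nil, or_false] at hx
    exact hx
  have hET : ∀ i : Fin m, E ≠ T i := by
    intro i hEi
    apply hCadj
    have : s(u, v) ∈ (T i).1.edges := by
      rw [← hEi]
      exact Path.mk'_mem_edges_singleton huv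
    rw [hTedges i] at this
    exact (P i).1.edges_subset_edgeSet this
  -- the family of m+1 paths in G
  let Q : Fin (m + 1) → G.Path u v := Fin.snoc T E
  have hQmem : (m + 1) ∈ pathFam G u v := by
    refine ⟨Q, ?_, ?_⟩
    · intro i j hij
      induction i using Fin.lastCases with
      | last =>
        induction j using Fin.lastCases with
        | last => rfl
        | cast j =>
          exfalso
          apply hET j
          simpa [Q, Fin.snoc_last, Fin.snoc_castSucc] using hij
      | cast i =>
        induction j using Fin.lastCases with
        | last =>
          exfalso
          apply hET i
          simpa [Q, Fin.snoc_last, Fin.snoc_castSucc] using hij.symm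
        | cast j =>
          have : T i = T j := by simpa [Q, Fin.snoc_castSucc] using hij
          exact congrArg Fin.castSucc (hTinj this)
    · intro i j hne x hxi hxj
      induction i using Fin.lastCases with
      | last =>
        have : x ∈ E.1.support := by simpa [Q, Fin.snoc_last] using hxi
        exact hEsupp x this
      | cast i =>
        induction j using Fin.lastCases with
        | last =>
          have : x ∈ E.1.support := by simpa [Q, Fin.snoc_last] using hxj
          exact hEsupp x this
        | cast j =>
          have hne' : i ≠ j := by
            intro h; exact hne (by rw [h])
          have hxi' : x ∈ (P i).1.support := by
            rw [← hTsupp i]; simpa [Q, Fin.snoc_castSucc] using hxi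
          have hxj' : x ∈ (P j).1.support := by
            rw [← hTsupp j]; simpa [Q, Fin.snoc_castSucc] using hxj
          exact hPdisj hne' x hxi' hxj'
  have hG : m + 1 ≤ localVertexConn G u v := by
    rw [lvc_eq]
    exact le_csSup (bddAbove_pathFam G u v) hQmem
  have hk1 : m + 1 ≤ k := Nat.succ_le_of_lt (lt_of_le_of_lt hmcard hS)
  have : m + 1 ≤ m := by
    calc m + 1 = min (m + 1) k := (min_eq_left hk1).symm
      _ ≤ min (localVertexConn G u v) k := min_le_min hG le_rfl
      _ ≤ localVertexConn C u v := hκ u v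
      _ = m := hm.symm
  omega

end LVCaux

/-- If `C` is a spanning subgraph of `G` with `κ(x,y;C) ≥ min{κ(x,y;G), k}` for all
vertices `x, y`, then every `l`-separator `S` of `C` with `l < k` is an `l`-separator
of `G`. -/
theorem stmt_1 {V : Type*} [Fintype V] (k : ℕ) (hk : 0 < k)
    (G C : SimpleGraph V) (hCG : C ≤ G)
    (hκ : ∀ x y : V, min (localVertexConn G x y) k ≤ localVertexConn C x y)
    (S : Finset V) (l : ℕ) (hl : l < k) (hsep : IsSeparator C S l) :
    IsSeparator G S l := by
  obtain ⟨hcard, hlt⟩ := hsep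
  have hS : S.card < k := by rw [hcard]; exact hl
  refine ⟨hcard, ?_⟩
  -- the reachability relations on the induced graphs agree
  have forward : ∀ (a b : ↥((S : Set V)ᶜ)),
      (G.induce ((S : Set V)ᶜ)).Reachable a b → (C.induce ((S : Set V)ᶜ)).Reachable a b := by
    intro a b hab
    obtain ⟨w⟩ := hab
    induction w with
    | nil => exact Reachable.refl _
    | @cons x y z hadj p ih =>
      have hGxy : G.Adj (x : V) (y : V) := hadj
      exact (LVCaux.key hCG hκ hS x.2 y.2 hGxy).trans ih
  have hiff : ∀ a b : ↥((S : Set V)ᶜ),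
      (C.induce ((S : Set V)ᶜ)).Reachable a b ↔ (G.induce ((S : Set V)ᶜ)).Reachable a b := by
    intro a b
    constructor
    · intro h
      exact h.mono (fun x y hxy => by
        simp only [comap_adj] at hxy ⊢
        exact hCG hxy)
    · exact forward a b
  have e : (C.induce ((S : Set V)ᶜ)).ConnectedComponent ≃
      (G.induce ((S : Set V)ᶜ)).ConnectedComponent :=
    Quot.congrRight hiff
  haveI : Finite C.ConnectedComponent := Quot.finite _
  have h1 : Nat.card G.ConnectedComponent ≤ Nat.card C.ConnectedComponent := by
    refine Nat.card_le_card_of_surjective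
      (ConnectedComponent.map (Hom.ofLE hCG)) ?_
    intro c
    refine c.ind (fun v => ⟨C.connectedComponentMk v, ?_⟩)
    simp [ConnectedComponent.map_mk, Hom.ofLE_apply]
  calc Nat.card G.ConnectedComponent ≤ Nat.card C.ConnectedComponent := h1
    _ < Nat.card (C.induce ((S : Set V)ᶜ)).ConnectedComponent := hlt
    _ = Nat.card (G.induce ((S : Set V)ᶜ)).ConnectedComponent := Nat.card_congr e
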